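/- arXiv:1312.1973 — 2 statements merged into one kernel-verified Lean document; each statement's English description precedes it below -/
import Mathlib

section
/- For fixed λ > 0 and integer N ≥ 2, define F̲ : {1,...,N-1} → ℝ (as a function of p ∈ [0,1)) by F̲(N-1) = (1-p)^{N-1}/(λ(N-1)) and, for 1 ≤ i ≤ N-2, F̲(i) = (1-p)^{i(N-i)}·[1/(λ i(N-i)) + F̲(i+1)] + ∑_{c=1}^{N-i-1} binomial(N-i, c)·(1-(1-p)^i)^c·(1-p)^{i(N-i-c)}·F̲(i+c). Then, as p → 0⁺, F̲(1) = F_0(1) - λ^{-1}(N-1)·p + o(p), where F_0(1) = ∑_{i=1}^{N-1} 1/(λ i(N-i)). -/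
noncomputable def hA (lam : ℝ) (N : ℕ) : ℕ → ℝ → ℝ
  | 0 => fun p => (1 - p) ^ (N - 1) / (lam * ((N : ℝ) - 1))
  | (k + 1) => fun p =>
      (1 - p) ^ ((N - 2 - k) * (N - (N - 2 - k))) *
        (1 / (lam * ((N - 2 - k : ℕ) : ℝ) * ((N : ℝ) - ((N - 2 - k : ℕ) : ℝ))) + hA lam N k p) +
      ∑ c ∈ (Finset.Icc 1 (k + 1)).attach,
        ((N - (N - 2 - k)).choose c.1 : ℝ) * (1 - (1 - p) ^ (N - 2 - k)) ^ c.1 *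
          (1 - p) ^ ((N - 2 - k) * (N - (N - 2 - k) - c.1)) * hA lam N (k + 1 - c.1) p
  decreasing_by
    all_goals first
      | omega
      | (have := c.2; simp only [Finset.mem_Icc] at this; omega)

lemma hd_pow (m : ℕ) : HasDerivAt (fun p : ℝ => (1 - p) ^ m) (-(m : ℝ)) 0 := by
  have h : HasDerivAt (fun p : ℝ => 1 - p) (-1 : ℝ) 0 := by
    simpa using (hasDerivAt_const (0 : ℝ) (1 : ℝ)).fun_sub (hasDerivAt_id 0)
  simpa using h.fun_pow m

lemma hd_B (i c : ℕ) :
    HasDerivAt (fun p : ℝ => (1 - (1 - p) ^ i) ^ c) ((c : ℝ) * (0 : ℝ) ^ (c - 1) * i) 0 := by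
  have h : HasDerivAt (fun p : ℝ => 1 - (1 - p) ^ i) (i : ℝ) 0 := by
    simpa using (hasDerivAt_const (0 : ℝ) (1 : ℝ)).fun_sub (hd_pow i)
  simpa using h.fun_pow c

lemma hA_key (lam : ℝ) (hlam : 0 < lam) (N : ℕ) (hN : 2 ≤ N) :
    ∀ k, k ≤ N - 2 →
      HasDerivAt (hA lam N k) (-((k : ℝ) + 1) / lam) 0 ∧
      hA lam N k 0 = ∑ j ∈ Finset.Icc (N - 1 - k) (N - 1), 1 / (lam * j * ((N : ℝ) - j)) := by
  intro k
  induction k using Nat.strong_induction_on with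
  | _ k ih =>
    match k with
    | 0 =>
      intro _
      have hne : (N : ℝ) - 1 ≠ 0 := by
        have : (2 : ℝ) ≤ N := by exact_mod_cast hN
        intro h; linarith
      have hcast : ((N - 1 : ℕ) : ℝ) = (N : ℝ) - 1 := by
        push_cast [Nat.cast_sub (by omega : 1 ≤ N)]; ring
      constructor
      · have h := (hd_pow (N - 1)).div_const (lam * ((N : ℝ) - 1))
        rw [hcast] at h
        have heq : -((N : ℝ) - 1) / (lam * ((N : ℝ) - 1)) = -(((0 : ℕ) : ℝ) + 1) / lam := by
          field_simp; ring
        rw [heq] at h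
        have hfun : hA lam N 0 = fun p : ℝ => (1 - p) ^ (N - 1) / (lam * ((N : ℝ) - 1)) := by
          funext p; simp only [hA]
        rw [hfun]
        exact h
      · have hv : hA lam N 0 0 = 1 / (lam * ((N : ℝ) - 1)) := by
          simp only [hA]; norm_num
        rw [hv, show N - 1 - 0 = N - 1 from rfl, Finset.Icc_self, Finset.sum_singleton,
          hcast, show (N : ℝ) - ((N : ℝ) - 1) = 1 by ring]
        ring
    | (k + 1) =>
      intro hk
      have hk3 : k + 3 ≤ N := by omega
      have hi1 : 1 ≤ N - 2 - k := by omega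
      have hNi : N - (N - 2 - k) = k + 2 := by omega
      have hcasti : ((N - 2 - k : ℕ) : ℝ) = (N : ℝ) - 2 - k := by
        rw [Nat.cast_sub (by omega : k ≤ N - 2), Nat.cast_sub (by omega : 2 ≤ N)]
        push_cast; ring
      have hipos : (0 : ℝ) < ((N - 2 - k : ℕ) : ℝ) := by exact_mod_cast hi1
      have eB : (N : ℝ) - ((N - 2 - k : ℕ) : ℝ) = (k : ℝ) + 2 := by
        rw [hcasti]; ring
      obtain ⟨hdk, hvk⟩ := ih k (by omega) (by omega)
      have H1 : HasDerivAt
          (fun p : ℝ => (1 - p) ^ ((N - 2 - k) * (N - (N - 2 - k))) *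
            (1 / (lam * ((N - 2 - k : ℕ) : ℝ) * ((N : ℝ) - ((N - 2 - k : ℕ) : ℝ))) + hA lam N k p))
          (-(((N - 2 - k) * (N - (N - 2 - k)) : ℕ) : ℝ) *
              (1 / (lam * ((N - 2 - k : ℕ) : ℝ) * ((N : ℝ) - ((N - 2 - k : ℕ) : ℝ))) + hA lam N k 0) +
            (1 - (0 : ℝ)) ^ ((N - 2 - k) * (N - (N - 2 - k))) *
              (0 + -((k : ℝ) + 1) / lam)) 0 :=
        (hd_pow _).mul ((hasDerivAt_const _ _).add hdk)
      have H2 : ∀ c ∈ (Finset.Icc 1 (k + 1)).attach, HasDerivAt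
          (fun p : ℝ => ((N - (N - 2 - k)).choose c.1 : ℝ) * (1 - (1 - p) ^ (N - 2 - k)) ^ c.1 *
            (1 - p) ^ ((N - 2 - k) * (N - (N - 2 - k) - c.1)) * hA lam N (k + 1 - c.1) p)
          (((N - (N - 2 - k)).choose c.1 : ℝ) * ((c.1 : ℝ) * (0 : ℝ) ^ (c.1 - 1) * ((N - 2 - k : ℕ) : ℝ)) *
            hA lam N (k + 1 - c.1) 0) 0 := by
        intro c _
        have hc1 := Finset.mem_Icc.mp c.2
        obtain ⟨hdc, -⟩ := ih (k + 1 - c.1) (by omega) (by omega)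
        have h := (((hd_B (N - 2 - k) c.1).const_mul
            ((N - (N - 2 - k)).choose c.1 : ℝ)).fun_mul
            (hd_pow ((N - 2 - k) * (N - (N - 2 - k) - c.1)))).fun_mul hdc
        refine h.congr_deriv ?_
        rw [show ((1 : ℝ) - (1 - 0) ^ (N - 2 - k)) = 0 by norm_num,
          zero_pow (by omega : c.1 ≠ 0)]
        norm_num
      have Hsum := HasDerivAt.fun_sum H2
      have Htot := H1.fun_add Hsum
      have hsum_eval : (∑ c ∈ (Finset.Icc 1 (k + 1)).attach,
          ((N - (N - 2 - k)).choose c.1 : ℝ) * ((c.1 : ℝ) * (0 : ℝ) ^ (c.1 - 1) * ((N - 2 - k : ℕ) : ℝ)) *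
            hA lam N (k + 1 - c.1) 0)
          = ((N - (N - 2 - k) : ℕ) : ℝ) * ((N - 2 - k : ℕ) : ℝ) * hA lam N k 0 := by
        rw [Finset.sum_attach (Finset.Icc 1 (k + 1)) (fun c =>
          ((N - (N - 2 - k)).choose c : ℝ) * ((c : ℝ) * (0 : ℝ) ^ (c - 1) * ((N - 2 - k : ℕ) : ℝ)) *
            hA lam N (k + 1 - c) 0)]
        rw [Finset.sum_eq_single 1]
        · norm_num [Nat.choose_one_right]
        · intro b _ hb1
          rcases Nat.eq_zero_or_pos b with rfl | hb
          · norm_num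
          · rw [zero_pow (by omega : b - 1 ≠ 0)]
            ring
        · intro h
          exact absurd (Finset.mem_Icc.mpr ⟨le_refl 1, by omega⟩) h
      have hzero : (∑ c ∈ (Finset.Icc 1 (k + 1)).attach,
          ((N - (N - 2 - k)).choose c.1 : ℝ) * (1 - (1 - (0:ℝ)) ^ (N - 2 - k)) ^ c.1 *
            (1 - (0:ℝ)) ^ ((N - 2 - k) * (N - (N - 2 - k) - c.1)) * hA lam N (k + 1 - c.1) 0) = 0 := by
        apply Finset.sum_eq_zero
        intro c _
        have hc1 := Finset.mem_Icc.mp c.2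
        rw [show ((1 : ℝ) - (1 - 0) ^ (N - 2 - k)) = 0 by norm_num,
          zero_pow (by omega : c.1 ≠ 0)]
        ring
      constructor
      · have hfun : hA lam N (k + 1) = fun p : ℝ =>
            (1 - p) ^ ((N - 2 - k) * (N - (N - 2 - k))) *
              (1 / (lam * ((N - 2 - k : ℕ) : ℝ) * ((N : ℝ) - ((N - 2 - k : ℕ) : ℝ))) + hA lam N k p) +
            ∑ c ∈ (Finset.Icc 1 (k + 1)).attach,
              ((N - (N - 2 - k)).choose c.1 : ℝ) * (1 - (1 - p) ^ (N - 2 - k)) ^ c.1 *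
                (1 - p) ^ ((N - 2 - k) * (N - (N - 2 - k) - c.1)) * hA lam N (k + 1 - c.1) p := by
          funext p; simp only [hA]
        rw [hfun]
        refine Htot.congr_deriv ?_
        rw [hsum_eval, hNi, eB]
        have hlamne : lam ≠ 0 := ne_of_gt hlam
        have hine : ((N - 2 - k : ℕ) : ℝ) ≠ 0 := ne_of_gt hipos
        have hk2ne : (k : ℝ) + 2 ≠ 0 := by positivity
        push_cast
        rw [show (1 : ℝ) - 0 = 1 by norm_num, one_pow]
        field_simp
        ring
      · have hv : hA lam N (k + 1) 0 =
            1 / (lam * ((N - 2 - k : ℕ) : ℝ) * ((N : ℝ) - ((N - 2 - k : ℕ) : ℝ))) + hA lam N k 0 := by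
          simp only [hA]
          rw [hzero]
          norm_num
        have hins : Finset.Icc (N - 1 - (k + 1)) (N - 1)
            = insert (N - 2 - k) (Finset.Icc (N - 1 - k) (N - 1)) := by
          ext x; simp only [Finset.mem_Icc, Finset.mem_insert]; omega
        rw [hv, hvk, hins, Finset.sum_insert (by simp only [Finset.mem_Icc]; omega)]

lemma hA_eq (lam : ℝ) (N : ℕ) (hN : 2 ≤ N) (Fl : ℝ → ℕ → ℝ)
    (hlast : ∀ p ∈ Set.Ico (0 : ℝ) 1,
      Fl p (N - 1) = (1 - p)^(N - 1) / (lam * ((N : ℝ) - 1)))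
    (hrec : ∀ p ∈ Set.Ico (0 : ℝ) 1, ∀ i : ℕ, 1 ≤ i → i ≤ N - 2 →
      Fl p i = (1 - p)^(i * (N - i)) * (1 / (lam * i * ((N : ℝ) - i)) + Fl p (i + 1)) +
        ∑ c ∈ Finset.Icc 1 (N - i - 1),
          ((N - i).choose c : ℝ) * (1 - (1 - p)^i)^c * (1 - p)^(i * (N - i - c)) *
            Fl p (i + c)) :
    ∀ k, k ≤ N - 2 → ∀ p ∈ Set.Ico (0 : ℝ) 1, Fl p (N - 1 - k) = hA lam N k p := by
  intro k
  induction k using Nat.strong_induction_on with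
  | _ k ih =>
    match k with
    | 0 =>
      intro _ p hp
      rw [show N - 1 - 0 = N - 1 from rfl, hlast p hp]
      simp only [hA]
    | (k + 1) =>
      intro hk p hp
      have hNk : N - 1 - (k + 1) = N - 2 - k := by omega
      rw [hNk, hrec p hp (N - 2 - k) (by omega) (by omega)]
      simp only [hA]
      rw [show N - (N - 2 - k) - 1 = k + 1 by omega]
      rw [Finset.sum_attach (Finset.Icc 1 (k + 1)) (fun c =>
        ((N - (N - 2 - k)).choose c : ℝ) * (1 - (1 - p) ^ (N - 2 - k)) ^ c *
          (1 - p) ^ ((N - 2 - k) * (N - (N - 2 - k) - c)) * hA lam N (k + 1 - c) p)]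
      congr 1
      · rw [show N - 2 - k + 1 = N - 1 - k by omega, ih k (by omega) (by omega) p hp]
      · apply Finset.sum_congr rfl
        intro c hc
        have hc' := Finset.mem_Icc.mp hc
        rw [show N - 2 - k + c = N - 1 - (k + 1 - c) by omega,
          ih (k + 1 - c) (by omega) (by omega) p hp]

theorem stmt_14 (lam : ℝ) (hlam : 0 < lam) (N : ℕ) (hN : 2 ≤ N)
    (Fl : ℝ → ℕ → ℝ)
    (hlast : ∀ p ∈ Set.Ico (0 : ℝ) 1,
      Fl p (N - 1) = (1 - p)^(N - 1) / (lam * ((N : ℝ) - 1)))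
    (hrec : ∀ p ∈ Set.Ico (0 : ℝ) 1, ∀ i : ℕ, 1 ≤ i → i ≤ N - 2 →
      Fl p i = (1 - p)^(i * (N - i)) * (1 / (lam * i * ((N : ℝ) - i)) + Fl p (i + 1)) +
        ∑ c ∈ Finset.Icc 1 (N - i - 1),
          ((N - i).choose c : ℝ) * (1 - (1 - p)^i)^c * (1 - p)^(i * (N - i - c)) *
            Fl p (i + c)) :
    (fun p : ℝ =>
        Fl p 1 - ((∑ i ∈ Finset.Icc 1 (N - 1), 1 / (lam * i * ((N : ℝ) - i))) -
          lam⁻¹ * ((N : ℝ) - 1) * p)) =o[nhdsWithin 0 (Set.Ioi 0)] fun p => p := by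
  obtain ⟨hd, hv⟩ := hA_key lam hlam N hN (N - 2) le_rfl
  rw [show N - 1 - (N - 2) = 1 by omega] at hv
  have h1 := hasDerivAt_iff_isLittleO.mp hd
  have h2 := h1.mono (nhdsWithin_le_nhds (s := Set.Ioi (0 : ℝ)))
  have heq : (fun p : ℝ =>
        Fl p 1 - ((∑ i ∈ Finset.Icc 1 (N - 1), 1 / (lam * i * ((N : ℝ) - i))) -
          lam⁻¹ * ((N : ℝ) - 1) * p)) =ᶠ[nhdsWithin 0 (Set.Ioi 0)]
      (fun x : ℝ => hA lam N (N - 2) x - hA lam N (N - 2) 0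
        - (x - 0) • (-((((N : ℕ) - 2 : ℕ) : ℝ) + 1) / lam)) := by
    filter_upwards [Ioo_mem_nhdsGT_of_mem
      (show (0 : ℝ) ∈ Set.Ico (0 : ℝ) 1 by constructor <;> norm_num)] with p hp
    have hp' : p ∈ Set.Ico (0 : ℝ) 1 := ⟨le_of_lt hp.1, hp.2⟩
    have hFl := hA_eq lam N hN Fl hlast hrec (N - 2) le_rfl p hp'
    rw [show N - 1 - (N - 2) = 1 by omega] at hFl
    rw [hFl, hv, smul_eq_mul,
      show ((N - 2 : ℕ) : ℝ) + 1 = (N : ℝ) - 1 by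
        rw [Nat.cast_sub (by omega : 2 ≤ N)]; push_cast; ring]
    ring
  have heq2 : (fun x : ℝ => x - 0) =ᶠ[nhdsWithin 0 (Set.Ioi 0)] (fun p : ℝ => p) := by
    filter_upwards with x; ring
  exact h2.congr' heq.symm heq2
end

section
/- For fixed λ > 0, N ≥ 2, and p ∈ [0,1], the sparse-regime flooding time F_0(1) = ∑_{i=1}^{N-1} 1/(λ i(N-i)) is an upper bound for the lower-bound recursion value F̲(1): F̲(1) ≤ F_0(1), with equality when p = 0. -/
noncomputable def Gfun (lam : ℝ) (N : ℕ) (i : ℕ) : ℝ :=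
  ∑ j ∈ Finset.Icc i (N - 1), 1 / (lam * j * ((N : ℝ) - j))

lemma binom_partial_le (s : ℝ) (hs0 : 0 ≤ s) (hs1 : s ≤ 1) (m : ℕ) (hm : 1 ≤ m) :
    s ^ m + ∑ c ∈ Finset.Icc 1 (m - 1),
      (m.choose c : ℝ) * (1 - s) ^ c * s ^ (m - c) ≤ 1 := by
  have h1 : ∑ c ∈ Finset.range (m + 1),
      (m.choose c : ℝ) * (1 - s) ^ c * s ^ (m - c) = 1 := by
    have h := add_pow (1 - s) s m
    rw [sub_add_cancel, one_pow] at h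
    calc ∑ c ∈ Finset.range (m + 1), (m.choose c : ℝ) * (1 - s) ^ c * s ^ (m - c)
        = ∑ c ∈ Finset.range (m + 1), (1 - s) ^ c * s ^ (m - c) * (m.choose c : ℝ) :=
          Finset.sum_congr rfl fun c _ => by ring
      _ = 1 := h.symm
  have hnn : ∀ c : ℕ, 0 ≤ (m.choose c : ℝ) * (1 - s) ^ c * s ^ (m - c) := by
    intro c
    exact mul_nonneg (mul_nonneg (Nat.cast_nonneg _) (pow_nonneg (by linarith) _))
      (pow_nonneg hs0 _)
  have h2 : insert 0 (Finset.Icc 1 (m - 1)) = Finset.Icc 0 (m - 1) := by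
    ext x; simp only [Finset.mem_insert, Finset.mem_Icc]; omega
  have h3 : s ^ m + ∑ c ∈ Finset.Icc 1 (m - 1),
      (m.choose c : ℝ) * (1 - s) ^ c * s ^ (m - c)
      = ∑ c ∈ Finset.Icc 0 (m - 1), (m.choose c : ℝ) * (1 - s) ^ c * s ^ (m - c) := by
    rw [← h2, Finset.sum_insert (by simp)]
    simp
  have h4 : ∑ c ∈ Finset.Icc 0 (m - 1), (m.choose c : ℝ) * (1 - s) ^ c * s ^ (m - c)
      ≤ ∑ c ∈ Finset.range (m + 1), (m.choose c : ℝ) * (1 - s) ^ c * s ^ (m - c) := by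
    apply Finset.sum_le_sum_of_subset_of_nonneg
    · intro x hx
      simp only [Finset.mem_Icc] at hx
      simp only [Finset.mem_range]
      omega
    · intro c _ _
      exact hnn c
  linarith

lemma aux_key (lam : ℝ) (hlam : 0 < lam) (N : ℕ) (hN : 2 ≤ N)
    (p : ℝ) (hp0 : 0 ≤ p) (hp1 : p ≤ 1) (Fl : ℕ → ℝ)
    (hlast : Fl (N - 1) = (1 - p)^(N - 1) / (lam * ((N : ℝ) - 1)))
    (hrec : ∀ i : ℕ, 1 ≤ i → i ≤ N - 2 →
      Fl i = (1 - p)^(i * (N - i)) * (1 / (lam * i * ((N : ℝ) - i)) + Fl (i + 1)) +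
        ∑ c ∈ Finset.Icc 1 (N - i - 1),
          ((N - i).choose c : ℝ) * (1 - (1 - p)^i)^c * (1 - p)^(i * (N - i - c)) *
            Fl (i + c)) :
    ∀ d : ℕ, ∀ i : ℕ, 1 ≤ i → i + d = N - 1 →
      Fl i ≤ Gfun lam N i ∧ (p = 0 → Fl i = Gfun lam N i) := by
  have hr0 : (0:ℝ) ≤ 1 - p := by linarith
  have hr1 : (1:ℝ) - p ≤ 1 := by linarith
  have hterm_nonneg : ∀ j : ℕ, j ≤ N - 1 → 0 ≤ 1 / (lam * j * ((N : ℝ) - j)) := by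
    intro j hj
    apply one_div_nonneg.mpr
    apply mul_nonneg (mul_nonneg hlam.le (Nat.cast_nonneg j))
    have : (j : ℝ) ≤ (N : ℝ) := by exact_mod_cast (by omega : j ≤ N)
    linarith
  have hGnonneg : ∀ i, 0 ≤ Gfun lam N i := by
    intro i
    exact Finset.sum_nonneg fun j hj => hterm_nonneg j (Finset.mem_Icc.mp hj).2
  have hGmono : ∀ i j : ℕ, i ≤ j → Gfun lam N j ≤ Gfun lam N i := by
    intro i j hij
    apply Finset.sum_le_sum_of_subset_of_nonneg (Finset.Icc_subset_Icc_left hij)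
    intro k hk _
    exact hterm_nonneg k (Finset.mem_Icc.mp hk).2
  have hGstep : ∀ i : ℕ, 1 ≤ i → i ≤ N - 2 →
      Gfun lam N i = 1 / (lam * i * ((N : ℝ) - i)) + Gfun lam N (i + 1) := by
    intro i h1 h2
    unfold Gfun
    rw [Finset.Icc_eq_cons_Ioc (show i ≤ N - 1 by omega), Finset.sum_cons,
      ← Finset.Icc_add_one_left_eq_Ioc]
  have hGlast : Gfun lam N (N - 1) = 1 / (lam * ((N : ℝ) - 1)) := by
    unfold Gfun
    rw [Finset.Icc_self, Finset.sum_singleton]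
    have hc : ((N - 1 : ℕ) : ℝ) = (N : ℝ) - 1 := by
      rw [Nat.cast_sub (by omega : 1 ≤ N)]; norm_num
    rw [hc]
    congr 1
    ring
  intro d
  induction d using Nat.strong_induction_on with
  | _ d ih =>
    intro i hi1 hid
    by_cases hd : d = 0
    · subst hd
      have hiN : i = N - 1 := by omega
      subst hiN
      rw [hlast, hGlast]
      have hden : 0 < lam * ((N : ℝ) - 1) := by
        have h2 : (2:ℝ) ≤ (N:ℝ) := by exact_mod_cast hN
        have : (0:ℝ) < (N:ℝ) - 1 := by linarith
        positivity
      constructor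
      · rw [div_le_div_iff₀ hden hden]
        have hle : (1 - p) ^ (N - 1) ≤ 1 := pow_le_one₀ hr0 hr1
        nlinarith
      · intro hq; subst hq; norm_num
    · have hi2 : i ≤ N - 2 := by omega
      have hrec' := hrec i hi1 hi2
      have hIH : ∀ j, i < j → j ≤ N - 1 → Fl j ≤ Gfun lam N j ∧
          (p = 0 → Fl j = Gfun lam N j) := by
        intro j hj1 hj2
        exact ih (N - 1 - j) (by omega) j (by omega) (by omega)
      have hs0 : 0 ≤ (1 - p) ^ i := pow_nonneg hr0 _
      have hs1 : (1 - p) ^ i ≤ 1 := pow_le_one₀ hr0 hr1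
      have ht0 : (0:ℝ) ≤ 1 - (1 - p) ^ i := by linarith
      constructor
      · rw [hrec']
        have h1 : (1 - p) ^ (i * (N - i)) * (1 / (lam * i * ((N : ℝ) - i)) + Fl (i + 1))
            ≤ (1 - p) ^ (i * (N - i)) * Gfun lam N i := by
          apply mul_le_mul_of_nonneg_left _ (pow_nonneg hr0 _)
          rw [hGstep i hi1 hi2]
          have := (hIH (i + 1) (by omega) (by omega)).1
          linarith
        have h2 : ∑ c ∈ Finset.Icc 1 (N - i - 1),
              ((N - i).choose c : ℝ) * (1 - (1 - p)^i)^c * (1 - p)^(i * (N - i - c)) *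
                Fl (i + c)
            ≤ (∑ c ∈ Finset.Icc 1 (N - i - 1),
              ((N - i).choose c : ℝ) * (1 - (1 - p)^i)^c * (1 - p)^(i * (N - i - c)))
              * Gfun lam N i := by
          rw [Finset.sum_mul]
          apply Finset.sum_le_sum
          intro c hc
          obtain ⟨hc1, hc2⟩ := Finset.mem_Icc.mp hc
          have hw : 0 ≤ ((N - i).choose c : ℝ) * (1 - (1 - p)^i)^c *
              (1 - p)^(i * (N - i - c)) :=
            mul_nonneg (mul_nonneg (Nat.cast_nonneg _) (pow_nonneg ht0 _))
              (pow_nonneg hr0 _)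
          calc ((N - i).choose c : ℝ) * (1 - (1 - p)^i)^c * (1 - p)^(i * (N - i - c)) *
                Fl (i + c)
              ≤ ((N - i).choose c : ℝ) * (1 - (1 - p)^i)^c * (1 - p)^(i * (N - i - c)) *
                Gfun lam N (i + c) :=
                mul_le_mul_of_nonneg_left (hIH (i + c) (by omega) (by omega)).1 hw
            _ ≤ ((N - i).choose c : ℝ) * (1 - (1 - p)^i)^c * (1 - p)^(i * (N - i - c)) *
                Gfun lam N i :=
                mul_le_mul_of_nonneg_left (hGmono i (i + c) (by omega)) hw
        have hcoef : (1 - p) ^ (i * (N - i)) + ∑ c ∈ Finset.Icc 1 (N - i - 1),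
            ((N - i).choose c : ℝ) * (1 - (1 - p)^i)^c * (1 - p)^(i * (N - i - c)) ≤ 1 := by
          have hb := binom_partial_le ((1 - p) ^ i) hs0 hs1 (N - i) (by omega)
          have he1 : (1 - p) ^ (i * (N - i)) = ((1 - p) ^ i) ^ (N - i) := pow_mul _ _ _
          have he2 : ∀ c ∈ Finset.Icc 1 (N - i - 1),
              ((N - i).choose c : ℝ) * (1 - (1 - p)^i)^c * (1 - p)^(i * (N - i - c))
              = ((N - i).choose c : ℝ) * (1 - (1 - p)^i)^c * ((1 - p)^i)^(N - i - c) := by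
            intro c _
            rw [pow_mul]
          rw [he1, Finset.sum_congr rfl he2]
          exact hb
        have hG := hGnonneg i
        nlinarith [mul_le_mul_of_nonneg_right hcoef hG]
      · intro hq
        subst hq
        rw [hrec']
        have hz : ∑ c ∈ Finset.Icc 1 (N - i - 1),
            ((N - i).choose c : ℝ) * (1 - (1 - (0:ℝ))^i)^c * (1 - (0:ℝ))^(i * (N - i - c)) *
              Fl (i + c) = 0 := by
          apply Finset.sum_eq_zero
          intro c hc
          have hc1 : c ≠ 0 := by
            have := (Finset.mem_Icc.mp hc).1; omega
          simp [zero_pow hc1]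
        rw [hz]
        rw [(hIH (i + 1) (by omega) (by omega)).2 rfl, hGstep i hi1 hi2]
        norm_num

theorem stmt_16 (lam : ℝ) (hlam : 0 < lam) (N : ℕ) (hN : 2 ≤ N)
    (p : ℝ) (hp : p ∈ Set.Icc (0 : ℝ) 1) (Fl : ℕ → ℝ)
    (hlast : Fl (N - 1) = (1 - p)^(N - 1) / (lam * ((N : ℝ) - 1)))
    (hrec : ∀ i : ℕ, 1 ≤ i → i ≤ N - 2 →
      Fl i = (1 - p)^(i * (N - i)) * (1 / (lam * i * ((N : ℝ) - i)) + Fl (i + 1)) +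
        ∑ c ∈ Finset.Icc 1 (N - i - 1),
          ((N - i).choose c : ℝ) * (1 - (1 - p)^i)^c * (1 - p)^(i * (N - i - c)) *
            Fl (i + c)) :
    Fl 1 ≤ ∑ i ∈ Finset.Icc 1 (N - 1), 1 / (lam * i * ((N : ℝ) - i)) ∧
    (p = 0 → Fl 1 = ∑ i ∈ Finset.Icc 1 (N - 1), 1 / (lam * i * ((N : ℝ) - i))) := by
  have h := aux_key lam hlam N hN p hp.1 hp.2 Fl hlast hrec (N - 2) 1 le_rfl (by omega)
  exact h
end
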